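/- arXiv:1110.4312 — 3 statements merged into one kernel-verified Lean document; each statement's English description precedes it below -/
import Mathlib

section
/- The cascade map G is monotone: if a, b ∈ [0,1]^ℕ satisfy a_j ≤ b_j for all j ∈ ℕ, then G_j(a) ≤ G_j(b) for all j ∈ ℕ. -/
/-- In-degree marginal `P⁺_k = Σ_j P_{jk}` of the node-type distribution. -/
noncomputable def Pplus (P : ℕ → ℕ → ℝ) (k : ℕ) : ℝ := ∑' j, P j k

/-- In-degree marginal `Q⁻_j = Σ_k Q_{kj}` of the edge-type distribution. -/
noncomputable def Qminus (Q : ℕ → ℕ → ℝ) (j : ℕ) : ℝ := ∑' k, Q k j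

/-- Initially defaulted edge fractions `σ⁰_{kj} = Σ_{j'} ρ⁰_{j'k} P_{j'k} / P⁺_k`. -/
noncomputable def sigma0 (P ρ0 : ℕ → ℕ → ℝ) (k : ℕ) : ℝ :=
  (∑' j', ρ0 j' k * P j' k) / Pplus P k

/-- Binomial tail `Σ_{m=M}^{j} C(j,m) x^m (1−x)^{j−m}`. -/
noncomputable def binomialTail (j M : ℕ) (x : ℝ) : ℝ :=
  ∑ m ∈ Finset.Icc M j, (j.choose m : ℝ) * x ^ m * (1 - x) ^ (j - m)

lemma term_nonneg (j m : ℕ) {x : ℝ} (hx0 : 0 ≤ x) (hx1 : x ≤ 1) :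
    0 ≤ (j.choose m : ℝ) * x ^ m * (1 - x) ^ (j - m) :=
  mul_nonneg (mul_nonneg (by positivity) (pow_nonneg hx0 _))
    (pow_nonneg (by linarith) _)

lemma binomialTail_nonneg (j M : ℕ) {x : ℝ} (hx0 : 0 ≤ x) (hx1 : x ≤ 1) :
    0 ≤ binomialTail j M x :=
  Finset.sum_nonneg fun m _ => term_nonneg j m hx0 hx1

lemma binomialTail_le_one (j M : ℕ) {x : ℝ} (hx0 : 0 ≤ x) (hx1 : x ≤ 1) :
    binomialTail j M x ≤ 1 := by
  have h1 : ∑ m ∈ Finset.range (j+1), x ^ m * (1 - x) ^ (j - m) * (j.choose m : ℝ) = 1 := by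
    have := add_pow x (1-x) j
    simpa using this.symm
  calc binomialTail j M x
      ≤ ∑ m ∈ Finset.range (j+1), (j.choose m : ℝ) * x ^ m * (1 - x) ^ (j - m) := by
        apply Finset.sum_le_sum_of_subset_of_nonneg
        · intro m hm
          simp only [Finset.mem_Icc] at hm
          simp [Finset.mem_range, Nat.lt_succ_iff, hm.2]
        · intro m _ _; exact term_nonneg j m hx0 hx1
    _ = ∑ m ∈ Finset.range (j+1), x ^ m * (1 - x) ^ (j - m) * (j.choose m : ℝ) :=
        Finset.sum_congr rfl fun m _ => by ring
    _ = 1 := h1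

lemma hasDerivAt_binomialTail (j M : ℕ) (hM : 1 ≤ M) (x : ℝ) :
    HasDerivAt (binomialTail j M)
      ((j.choose M : ℝ) * M * x ^ (M-1) * (1-x) ^ (j-M)) x := by
  set u : ℕ → ℝ := fun m => (j.choose m : ℝ) * m * x ^ (m-1) * (1-x) ^ (j-m) with hu
  have hterm : ∀ m ∈ Finset.Icc M j,
      HasDerivAt (fun y : ℝ => (j.choose m : ℝ) * y ^ m * (1 - y) ^ (j - m))
        (u m - u (m+1)) x := by
    intro m hm
    simp only [Finset.mem_Icc] at hm
    have hm1 : 1 ≤ m := le_trans hM hm.1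
    have h1 : HasDerivAt (fun y : ℝ => y ^ m) ((m:ℝ) * x ^ (m-1)) x := by
      simpa using hasDerivAt_pow m x
    have h2 : HasDerivAt (fun y : ℝ => (1 - y) ^ (j - m))
        (((j-m : ℕ):ℝ) * (1-x) ^ (j-m-1) * (-1)) x :=
      (HasDerivAt.fun_pow ((hasDerivAt_id x).const_sub 1) (j-m))
    have h3 := ((h1.const_mul ((j.choose m : ℝ))).fun_mul h2)
    convert h3 using 1
    all_goals try rfl
    have key : ((j.choose (m+1) : ℝ)) * (m+1) = (j.choose m : ℝ) * ((j - m : ℕ) : ℝ) := by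
      exact_mod_cast congrArg (Nat.cast (R := ℝ)) (Nat.choose_succ_right_eq j m)
    simp only [hu]
    rw [show m + 1 - 1 = m from rfl, show j - (m+1) = j - m - 1 from rfl]
    push_cast
    linear_combination (-(x ^ m * (1 - x) ^ (j - m - 1))) * key
  have hsum := HasDerivAt.fun_sum hterm
  have htel : ∑ m ∈ Finset.Icc M j, (u m - u (m+1)) = u M := by
    rcases le_or_gt M j with hMj | hMj
    · rw [← Finset.Ico_add_one_right_eq_Icc, Finset.sum_Ico_eq_sum_range]
      have t := Finset.sum_range_sub' (fun i => u (M + i)) (j + 1 - M)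
      simp only [← add_assoc] at t
      rw [t]
      have he : M + (j + 1 - M) = j + 1 := by omega
      have hz : u (j+1) = 0 := by
        simp [hu, Nat.choose_eq_zero_of_lt (Nat.lt_succ_self j)]
      rw [he, hz, sub_zero, Nat.add_zero]
    · have hz : u M = 0 := by
        simp [hu, Nat.choose_eq_zero_of_lt hMj]
      rw [Finset.Icc_eq_empty (by omega), Finset.sum_empty, hz]
  rw [htel] at hsum
  have : u M = (j.choose M : ℝ) * M * x ^ (M-1) * (1-x) ^ (j-M) := rfl
  rw [this] at hsum
  exact hsum

lemma binomialTail_mono (j M : ℕ) (hM : 1 ≤ M) {x y : ℝ} (hx0 : 0 ≤ x)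
    (hy1 : y ≤ 1) (hxy : x ≤ y) : binomialTail j M x ≤ binomialTail j M y := by
  have hmono : MonotoneOn (binomialTail j M) (Set.Icc 0 1) := by
    apply monotoneOn_of_deriv_nonneg (convex_Icc 0 1)
    · apply Continuous.continuousOn
      unfold binomialTail
      fun_prop
    · intro z _
      exact (hasDerivAt_binomialTail j M hM z).differentiableAt.differentiableWithinAt
    · intro z hz
      simp only [interior_Icc, Set.mem_Ioo] at hz
      rw [(hasDerivAt_binomialTail j M hM z).deriv]
      exact mul_nonneg (mul_nonneg (mul_nonneg (by positivity) (by positivity))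
        (pow_nonneg hz.1.le _)) (pow_nonneg (by linarith [hz.2]) _)
  exact hmono ⟨hx0, le_trans hxy hy1⟩ ⟨le_trans hx0 hxy, hy1⟩ hxy

/-- The cascade map `G` of the extended Gai–Kapadia model:
`G_j(a) = (1/Q⁻_j) Σ_k Q_{kj} [σ⁰_{kj} + Σ_{j'} (1−ρ⁰_{j'k}) (P_{j'k}/P⁺_k)
  Σ_{m=M_{j'k}}^{j'} C(j',m) a_{j'}^m (1−a_{j'})^{j'−m}]`. -/
noncomputable def cascadeMap (P Q ρ0 : ℕ → ℕ → ℝ) (M : ℕ → ℕ → ℕ)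
    (a : ℕ → ℝ) (j : ℕ) : ℝ :=
  (1 / Qminus Q j) * ∑' k, Q k j * (sigma0 P ρ0 k +
    ∑' j', (1 - ρ0 j' k) * (P j' k / Pplus P k) * binomialTail j' (M j' k) (a j'))

/-- The cascade map `G` is monotone for the pointwise order on `[0,1]^ℕ`. -/
theorem cascadeMap_monotone
    (P Q ρ0 : ℕ → ℕ → ℝ) (M : ℕ → ℕ → ℕ)
    (hP : ∀ j k, 0 ≤ P j k) (hPsum : HasSum (fun p : ℕ × ℕ => P p.1 p.2) 1)
    (hPplus : ∀ k, 0 < Pplus P k)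
    (hQ : ∀ k j, 0 ≤ Q k j) (hQsum : HasSum (fun p : ℕ × ℕ => Q p.1 p.2) 1)
    (hQminus : ∀ j, 0 < Qminus Q j)
    (hρ0 : ∀ j k, ρ0 j k ∈ Set.Icc (0 : ℝ) 1)
    (hM : ∀ j k, 1 ≤ M j k)
    (a b : ℕ → ℝ) (ha : ∀ j, a j ∈ Set.Icc (0 : ℝ) 1)
    (hb : ∀ j, b j ∈ Set.Icc (0 : ℝ) 1)
    (hab : ∀ j, a j ≤ b j) :
    ∀ j, cascadeMap P Q ρ0 M a j ≤ cascadeMap P Q ρ0 M b j := by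
  intro j
  -- Slice summability
  have hPk : ∀ k, Summable (fun j' => P j' k) := fun k =>
    hPsum.summable.comp_injective (i := fun j' => (j', k))
      (fun x y h => (Prod.ext_iff.mp h).1)
  have hQj : Summable (fun k => Q k j) :=
    hQsum.summable.comp_injective (i := fun k => (k, j))
      (fun x y h => (Prod.ext_iff.mp h).1)
  have hPdiv : ∀ k, Summable (fun j' => P j' k / Pplus P k) := fun k =>
    (hPk k).div_const _
  have hPdivsum : ∀ k, ∑' j', P j' k / Pplus P k = 1 := by
    intro k
    rw [tsum_div_const]
    exact div_self (hPplus k).ne'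
  -- Bounds for the inner summand
  have hcoef : ∀ k j', 0 ≤ (1 - ρ0 j' k) * (P j' k / Pplus P k) := fun k j' =>
    mul_nonneg (by linarith [(hρ0 j' k).2]) (div_nonneg (hP j' k) (hPplus k).le)
  have hfnn : ∀ (x : ℕ → ℝ), (∀ i, x i ∈ Set.Icc (0:ℝ) 1) → ∀ k j',
      0 ≤ (1 - ρ0 j' k) * (P j' k / Pplus P k) * binomialTail j' (M j' k) (x j') :=
    fun x hx k j' => mul_nonneg (hcoef k j')
      (binomialTail_nonneg _ _ (hx j').1 (hx j').2)
  have hfle : ∀ (x : ℕ → ℝ), (∀ i, x i ∈ Set.Icc (0:ℝ) 1) → ∀ k j',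
      (1 - ρ0 j' k) * (P j' k / Pplus P k) * binomialTail j' (M j' k) (x j')
        ≤ P j' k / Pplus P k := by
    intro x hx k j'
    have h1 : (1 - ρ0 j' k) * (P j' k / Pplus P k) ≤ P j' k / Pplus P k := by
      have := (hρ0 j' k).1
      nlinarith [div_nonneg (hP j' k) (hPplus k).le]
    calc (1 - ρ0 j' k) * (P j' k / Pplus P k) * binomialTail j' (M j' k) (x j')
        ≤ (1 - ρ0 j' k) * (P j' k / Pplus P k) * 1 :=
          mul_le_mul_of_nonneg_left
            (binomialTail_le_one _ _ (hx j').1 (hx j').2) (hcoef k j')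
      _ = (1 - ρ0 j' k) * (P j' k / Pplus P k) := mul_one _
      _ ≤ P j' k / Pplus P k := h1
  have hfsummable : ∀ (x : ℕ → ℝ), (∀ i, x i ∈ Set.Icc (0:ℝ) 1) → ∀ k,
      Summable (fun j' => (1 - ρ0 j' k) * (P j' k / Pplus P k) *
        binomialTail j' (M j' k) (x j')) := fun x hx k =>
    Summable.of_nonneg_of_le (hfnn x hx k) (hfle x hx k) (hPdiv k)
  -- Inner tsum bounds
  have hinner_nn : ∀ (x : ℕ → ℝ), (∀ i, x i ∈ Set.Icc (0:ℝ) 1) → ∀ k,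
      0 ≤ ∑' j', (1 - ρ0 j' k) * (P j' k / Pplus P k) *
        binomialTail j' (M j' k) (x j') := fun x hx k =>
    tsum_nonneg (hfnn x hx k)
  have hinner_le : ∀ (x : ℕ → ℝ), (∀ i, x i ∈ Set.Icc (0:ℝ) 1) → ∀ k,
      (∑' j', (1 - ρ0 j' k) * (P j' k / Pplus P k) *
        binomialTail j' (M j' k) (x j')) ≤ 1 := by
    intro x hx k
    calc (∑' j', (1 - ρ0 j' k) * (P j' k / Pplus P k) *
          binomialTail j' (M j' k) (x j'))
        ≤ ∑' j', P j' k / Pplus P k :=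
          Summable.tsum_le_tsum (hfle x hx k) (hfsummable x hx k) (hPdiv k)
      _ = 1 := hPdivsum k
  -- sigma0 bounds
  have hσnn : ∀ k, 0 ≤ sigma0 P ρ0 k := fun k =>
    div_nonneg (tsum_nonneg fun j' => mul_nonneg (hρ0 j' k).1 (hP j' k)) (hPplus k).le
  have hσle : ∀ k, sigma0 P ρ0 k ≤ 1 := by
    intro k
    rw [sigma0, div_le_one (hPplus k)]
    exact Summable.tsum_le_tsum
      (fun j' => by nlinarith [(hρ0 j' k).1, (hρ0 j' k).2, hP j' k])
      (Summable.of_nonneg_of_le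
        (fun j' => mul_nonneg (hρ0 j' k).1 (hP j' k))
        (fun j' => by nlinarith [(hρ0 j' k).1, (hρ0 j' k).2, hP j' k]) (hPk k))
      (hPk k)
  -- Outer summand bounds
  have houter : ∀ (x : ℕ → ℝ), (∀ i, x i ∈ Set.Icc (0:ℝ) 1) →
      Summable (fun k => Q k j * (sigma0 P ρ0 k +
        ∑' j', (1 - ρ0 j' k) * (P j' k / Pplus P k) *
          binomialTail j' (M j' k) (x j'))) := by
    intro x hx
    apply Summable.of_nonneg_of_le
      (fun k => mul_nonneg (hQ k j) (add_nonneg (hσnn k) (hinner_nn x hx k)))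
      (fun k => ?_) (hQj.mul_left 2)
    calc Q k j * (sigma0 P ρ0 k + ∑' j', (1 - ρ0 j' k) * (P j' k / Pplus P k) *
          binomialTail j' (M j' k) (x j'))
        ≤ Q k j * 2 := mul_le_mul_of_nonneg_left
          (by linarith [hσle k, hinner_le x hx k]) (hQ k j)
      _ = 2 * Q k j := mul_comm _ _
  -- Termwise comparison
  have hterm : ∀ k, Q k j * (sigma0 P ρ0 k +
      ∑' j', (1 - ρ0 j' k) * (P j' k / Pplus P k) *
        binomialTail j' (M j' k) (a j'))
      ≤ Q k j * (sigma0 P ρ0 k +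
      ∑' j', (1 - ρ0 j' k) * (P j' k / Pplus P k) *
        binomialTail j' (M j' k) (b j')) := by
    intro k
    apply mul_le_mul_of_nonneg_left _ (hQ k j)
    apply add_le_add_right
    apply Summable.tsum_le_tsum _ (hfsummable a ha k) (hfsummable b hb k)
    intro j'
    exact mul_le_mul_of_nonneg_left
      (binomialTail_mono j' (M j' k) (hM j' k) (ha j').1 (hb j').2 (hab j'))
      (hcoef k j')
  unfold cascadeMap
  exact mul_le_mul_of_nonneg_left
    (Summable.tsum_le_tsum hterm (houter a ha) (houter b hb))
    (one_div_nonneg.mpr (hQminus j).le)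
end

section
/- Suppose all initial default fractions vanish, ρ⁰_{jk} = 0 for all j,k (hence σ⁰_{kj} = 0). Then for every pair j, j' ∈ ℕ, the one-variable function t ↦ G_j(t·e_{j'}) (where e_{j'} ∈ [0,1]^ℕ is the sequence equal to 1 in coordinate j' and 0 elsewhere) is differentiable at t = 0 with derivative D_{jj'} = Σ_k j'·Q_{kj}·P_{j'k}·𝟙{M_{j'k} = 1} / (Q⁻_j·P⁺_k). -/
lemma binomialTail_zero (j M : ℕ) (h : 1 ≤ M) : binomialTail j M 0 = 0 := by
  refine Finset.sum_eq_zero fun m hm => ?_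
  have hm1 : 1 ≤ m := le_trans h (Finset.mem_Icc.mp hm).1
  rw [zero_pow (by omega)]; ring

lemma binomialTail_of_lt (j M : ℕ) (h : j < M) (x : ℝ) : binomialTail j M x = 0 := by
  unfold binomialTail
  rw [Finset.Icc_eq_empty (by omega), Finset.sum_empty]

lemma binomialTail_hasDerivAt (j M : ℕ) (h : 1 ≤ M) :
    HasDerivAt (binomialTail j M) ((j : ℝ) * if M = 1 then 1 else 0) 0 := by
  have key : ∀ m ∈ Finset.Icc M j,
      HasDerivAt (fun x : ℝ => (j.choose m : ℝ) * x ^ m * (1 - x) ^ (j - m))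
        (if m = 1 then (j : ℝ) else 0) 0 := by
    intro m hm
    obtain ⟨hMm, hmj⟩ := Finset.mem_Icc.mp hm
    have hm1 : 1 ≤ m := le_trans h hMm
    have h1 : HasDerivAt (fun x : ℝ => (j.choose m : ℝ) * x ^ m)
        ((j.choose m : ℝ) * ((m : ℝ) * (0:ℝ) ^ (m - 1))) 0 :=
      (hasDerivAt_pow m 0).const_mul _
    have h2 : HasDerivAt (fun x : ℝ => (1 - x) ^ (j - m))
        (-(((j - m : ℕ) : ℝ) * (1 - (0:ℝ)) ^ (j - m - 1))) 0 := by
      have := (((hasDerivAt_id (0:ℝ)).const_sub 1).fun_pow (j - m))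
      simpa using this
    have h3 := h1.fun_mul h2
    refine h3.congr_deriv ?_
    rcases eq_or_lt_of_le hm1 with h1' | h1'
    · rw [← h1']
      simp
    · rw [if_neg (by omega)]
      rw [zero_pow (by omega : m - 1 ≠ 0), zero_pow (by omega : m ≠ 0)]
      ring
  have hs := HasDerivAt.fun_sum key
  have hfe : binomialTail j M = fun x => ∑ m ∈ Finset.Icc M j,
      (j.choose m : ℝ) * x ^ m * (1 - x) ^ (j - m) := rfl
  rw [hfe]
  refine hs.congr_deriv ?_
  rw [Finset.sum_ite_eq' (Finset.Icc M j) 1 (fun _ => (j:ℝ))]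
  by_cases hM1 : M = 1
  · subst hM1
    by_cases hj : 1 ≤ j
    · simp [Finset.mem_Icc, hj]
    · have : j = 0 := by omega
      subst this; simp
  · rw [if_neg hM1, if_neg (by simp [Finset.mem_Icc]; omega), mul_zero]


/-- With vanishing initial defaults, the cascade map `G` is differentiable at
`0` along each coordinate direction `e_{j'}`, with derivative
`D_{jj'} = Σ_k j' Q_{kj} P_{j'k} 𝟙{M_{j'k} = 1} / (Q⁻_j P⁺_k)`
(the entries of the paper's cascade-condition matrix `D`). -/
theorem cascadeMap_hasDerivAt_zero
    (P Q ρ0 : ℕ → ℕ → ℝ) (M : ℕ → ℕ → ℕ)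
    (hP : ∀ j k, 0 ≤ P j k) (hPsum : HasSum (fun p : ℕ × ℕ => P p.1 p.2) 1)
    (hPplus : ∀ k, 0 < Pplus P k)
    (hQ : ∀ k j, 0 ≤ Q k j) (hQsum : HasSum (fun p : ℕ × ℕ => Q p.1 p.2) 1)
    (hQminus : ∀ j, 0 < Qminus Q j)
    (hρ0 : ∀ j k, ρ0 j k = 0)
    (hM : ∀ j k, 1 ≤ M j k) :
    ∀ j j' : ℕ,
      HasDerivAt
        (fun t : ℝ => cascadeMap P Q ρ0 M (fun i => if i = j' then t else 0) j)
        (∑' k, (j' : ℝ) * Q k j * P j' k * (if M j' k = 1 then (1 : ℝ) else 0)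
          / (Qminus Q j * Pplus P k)) 0 := by
  intro j j'
  have hQk : Summable fun k => Q k j := by
    have : Function.Injective (fun k : ℕ => (k, j)) := by
      intro a b hab; simpa using hab
    exact hQsum.summable.comp_injective this
  have hPk : ∀ k, Summable fun i => P i k := by
    intro k
    have : Function.Injective (fun i : ℕ => (i, k)) := by
      intro a b hab; simpa using hab
    exact hPsum.summable.comp_injective this
  have hPle : ∀ k, P j' k ≤ Pplus P k := fun k =>
    Summable.le_tsum (hPk k) j' (fun i _ => hP i k)
  have hr0 : ∀ k, 0 ≤ P j' k / Pplus P k := fun k =>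
    div_nonneg (hP j' k) (hPplus k).le
  have hr1 : ∀ k, P j' k / Pplus P k ≤ 1 := fun k =>
    (div_le_one (hPplus k)).mpr (hPle k)
  set c : ℕ → ℝ :=
    fun m => ∑' k, Q k j * (P j' k / Pplus P k) * (if M j' k = m then 1 else 0) with hc
  have hsm : ∀ m : ℕ,
      Summable fun k => Q k j * (P j' k / Pplus P k) * (if M j' k = m then 1 else 0) := by
    intro m
    refine Summable.of_nonneg_of_le (fun k => ?_) (fun k => ?_) hQk
    · have : (0:ℝ) ≤ (if M j' k = m then (1:ℝ) else 0) := by positivity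
      exact mul_nonneg (mul_nonneg (hQ k j) (hr0 k)) this
    · calc Q k j * (P j' k / Pplus P k) * (if M j' k = m then 1 else 0)
          ≤ Q k j * 1 * 1 := by
            apply mul_le_mul
            · exact mul_le_mul_of_nonneg_left (hr1 k) (hQ k j)
            · split <;> norm_num
            · positivity
            · exact mul_nonneg (hQ k j) zero_le_one
        _ = Q k j := by ring
  have hF : ∀ t : ℝ, cascadeMap P Q ρ0 M (fun i => if i = j' then t else 0) j
      = (1 / Qminus Q j) * ∑ m ∈ Finset.Icc 1 j', c m * binomialTail j' m t := by
    intro t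
    unfold cascadeMap
    congr 1
    have hinner : ∀ k, Q k j * (sigma0 P ρ0 k + ∑' i, (1 - ρ0 i k) * (P i k / Pplus P k) *
          binomialTail i (M i k) (if i = j' then t else 0))
        = ∑ m ∈ Finset.Icc 1 j',
            (Q k j * (P j' k / Pplus P k) * (if M j' k = m then 1 else 0))
              * binomialTail j' m t := by
      intro k
      have hs0 : sigma0 P ρ0 k = 0 := by simp [sigma0, hρ0]
      have hts : (∑' i, (1 - ρ0 i k) * (P i k / Pplus P k) *
            binomialTail i (M i k) (if i = j' then t else 0))
          = (P j' k / Pplus P k) * binomialTail j' (M j' k) t := by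
        rw [tsum_eq_single j' ?_]
        · simp [hρ0]
        · intro i hi
          simp [if_neg hi, binomialTail_zero i (M i k) (hM i k)]
      rw [hs0, zero_add, hts]
      have : ∀ m ∈ Finset.Icc 1 j',
          (Q k j * (P j' k / Pplus P k) * (if M j' k = m then 1 else 0))
            * binomialTail j' m t
          = if M j' k = m then
              Q k j * ((P j' k / Pplus P k) * binomialTail j' m t) else 0 := by
        intro m _; split <;> ring
      rw [Finset.sum_congr rfl this,
        Finset.sum_ite_eq (Finset.Icc 1 j') (M j' k)
          (fun m => Q k j * ((P j' k / Pplus P k) * binomialTail j' m t))]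
      by_cases hmem : M j' k ∈ Finset.Icc 1 j'
      · rw [if_pos hmem]
      · rw [if_neg hmem]
        have hlt : j' < M j' k := by
          have := hM j' k
          simp [Finset.mem_Icc] at hmem
          omega
        rw [binomialTail_of_lt j' (M j' k) hlt]
        ring
    rw [tsum_congr hinner]
    rw [Summable.tsum_finsetSum (fun m _ => (hsm m).mul_right (binomialTail j' m t))]
    refine Finset.sum_congr rfl fun m _ => ?_
    rw [tsum_mul_right]
  have hB : ∀ m ∈ Finset.Icc 1 j',
      HasDerivAt (fun t => c m * binomialTail j' m t)
        (c m * ((j' : ℝ) * if m = 1 then 1 else 0)) 0 := fun m hm =>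
    (binomialTail_hasDerivAt j' m (Finset.mem_Icc.mp hm).1).const_mul (c m)
  have hD := (HasDerivAt.fun_sum hB).const_mul (1 / Qminus Q j)
  have hfun : (fun t : ℝ => cascadeMap P Q ρ0 M (fun i => if i = j' then t else 0) j)
      = fun t => (1 / Qminus Q j) * ∑ m ∈ Finset.Icc 1 j', c m * binomialTail j' m t :=
    funext hF
  rw [hfun]
  refine hD.congr_deriv ?_
  -- target tsum equals computed derivative
  have hterm : ∀ k, (j' : ℝ) * Q k j * P j' k * (if M j' k = 1 then (1:ℝ) else 0)
      / (Qminus Q j * Pplus P k)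
      = ((j' : ℝ) / Qminus Q j) *
          (Q k j * (P j' k / Pplus P k) * (if M j' k = 1 then 1 else 0)) := by
    intro k
    have h1 : Qminus Q j ≠ 0 := (hQminus j).ne'
    have h2 : Pplus P k ≠ 0 := (hPplus k).ne'
    field_simp
  rw [tsum_congr hterm, tsum_mul_left]
  have hsum : ∑ m ∈ Finset.Icc 1 j', c m * ((j' : ℝ) * if m = 1 then 1 else 0)
      = if 1 ∈ Finset.Icc 1 j' then c 1 * (j' : ℝ) else 0 := by
    rw [← Finset.sum_ite_eq' (Finset.Icc 1 j') 1 (fun m => c m * (j' : ℝ))]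
    refine Finset.sum_congr rfl fun m _ => ?_
    split
    · ring
    · simp
  rw [hsum]
  by_cases hj : 1 ≤ j'
  · rw [if_pos (by simp [Finset.mem_Icc, hj])]
    ring
  · have : j' = 0 := by omega
    subst this
    rw [if_neg (by simp)]
    simp
end

section
/- For every pair k, k' ∈ ℕ, the one-variable function t ↦ h_k(e + t·e_{k'}) (where e = (1,1,1,…) and e_{k'} ∈ ℝ^ℕ is the sequence equal to 1 in coordinate k' and 0 elsewhere, and h is evaluated by the same series formula for arguments near e) is differentiable at t = 0 with derivative D̃_{kk'} = Σ_{j'} k'·Q_{kj'}·P_{j'k'}·Γ_{j'k'} / (Q⁺_k·P⁻_{j'}). -/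
/-- Out-degree marginal `P⁻_{j'} = Σ_{k'} P_{j'k'}` of the node-type distribution. -/
noncomputable def Pminus (P : ℕ → ℕ → ℝ) (j' : ℕ) : ℝ := ∑' k', P j' k'

/-- Out-degree marginal `Q⁺_k = Σ_{j'} Q_{kj'}` of the edge-type distribution. -/
noncomputable def Qplus (Q : ℕ → ℕ → ℝ) (k : ℕ) : ℝ := ∑' j', Q k j'

/-- The percolation map `h` for the in-component of the giant vulnerable
cluster: `h_k(c) = Σ_{j',k'} (Γ_{j'k'} (c_{k'})^{k'} + (1 − Γ_{j'k'}))
· P_{j'k'} Q_{kj'} / (P⁻_{j'} Q⁺_k)` (with the convention `(c_0)^0 = 1`). -/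
noncomputable def percMap (P Q Γ : ℕ → ℕ → ℝ) (c : ℕ → ℝ) (k : ℕ) : ℝ :=
  ∑' (j' : ℕ) (k' : ℕ),
    (Γ j' k' * (c k') ^ k' + (1 - Γ j' k')) * P j' k' * Q k j'
      / (Pminus P j' * Qplus Q k)

/-- The percolation map `h` is differentiable at the trivial fixed point
`e = (1,1,…)` along each coordinate direction `e_{k'}`, with derivative
`D̃_{kk'} = Σ_{j'} k' Q_{kj'} P_{j'k'} Γ_{j'k'} / (Q⁺_k P⁻_{j'})`. -/
theorem percMap_hasDerivAt_one
    (P Q Γ : ℕ → ℕ → ℝ)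
    (hP : ∀ j' k', 0 ≤ P j' k') (hPminus : ∀ j', 0 < Pminus P j')
    (hQ : ∀ k j', 0 ≤ Q k j') (hQplus : ∀ k, 0 < Qplus Q k)
    (hΓ : ∀ j' k', Γ j' k' = 0 ∨ Γ j' k' = 1) :
    ∀ k k' : ℕ,
      HasDerivAt
        (fun t : ℝ => percMap P Q Γ (fun i => 1 + if i = k' then t else 0) k)
        (∑' j', (k' : ℝ) * Q k j' * P j' k' * Γ j' k'
          / (Qplus Q k * Pminus P j')) 0 := by
  intro k k'
  -- summability of the rows of P and Q
  have hPsum : ∀ j', Summable (fun k'' => P j' k'') := by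
    intro j'
    by_contra h
    have h0 := hPminus j'
    rw [Pminus, tsum_eq_zero_of_not_summable h] at h0
    exact lt_irrefl 0 h0
  have hQsum : Summable (fun j' => Q k j') := by
    by_contra h
    have h0 := hQplus k
    rw [Qplus, tsum_eq_zero_of_not_summable h] at h0
    exact lt_irrefl 0 h0
  have hΓ01 : ∀ j' k'', 0 ≤ Γ j' k'' ∧ Γ j' k'' ≤ 1 := by
    intro j' k''; rcases hΓ j' k'' with h | h <;> simp [h]
  -- the key constants
  set B : ℝ := ∑' j', Γ j' k' * P j' k' * Q k j' / (Pminus P j' * Qplus Q k) with hB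
  set A : ℝ := ∑' j', Q k j' / Qplus Q k with hA
  have hDsum : Summable (fun j' => Γ j' k' * P j' k' * Q k j' /
      (Pminus P j' * Qplus Q k)) := by
    refine Summable.of_nonneg_of_le ?_ ?_ (hQsum.div_const (Qplus Q k))
    · intro j'
      apply div_nonneg
      · exact mul_nonneg (mul_nonneg (hΓ01 j' k').1 (hP j' k')) (hQ k j')
      · exact (mul_pos (hPminus j') (hQplus k)).le
    · intro j'
      have h1 : Γ j' k' * P j' k' * Q k j' / (Pminus P j' * Qplus Q k)
          = (Γ j' k' * (P j' k' / Pminus P j')) * (Q k j' / Qplus Q k) := by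
        field_simp
      rw [h1]
      apply mul_le_of_le_one_left (div_nonneg (hQ k j') (hQplus k).le)
      have hP1 : P j' k' / Pminus P j' ≤ 1 :=
        (div_le_one (hPminus j')).2 ((hPsum j').le_tsum k' fun i _ => hP j' i)
      calc Γ j' k' * (P j' k' / Pminus P j') ≤ 1 * 1 :=
            mul_le_mul (hΓ01 j' k').2 hP1
              (div_nonneg (hP j' k') (hPminus j').le) zero_le_one
        _ = 1 := one_mul 1
  -- the map is affine in (1+t)^k'
  have key : ∀ t : ℝ,
      percMap P Q Γ (fun i => 1 + if i = k' then t else 0) k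
        = A + ((1 + t) ^ k' - 1) * B := by
    intro t
    have inner : ∀ j' : ℕ,
        (∑' k'' : ℕ,
          (Γ j' k'' * ((fun i => 1 + if i = k' then t else 0) k'') ^ k''
            + (1 - Γ j' k'')) * P j' k'' * Q k j'
            / (Pminus P j' * Qplus Q k))
        = Q k j' / Qplus Q k
          + ((1 + t) ^ k' - 1) *
            (Γ j' k' * P j' k' * Q k j' / (Pminus P j' * Qplus Q k)) := by
      intro j'
      have hsplit : ∀ k'' : ℕ,
          (Γ j' k'' * ((fun i => 1 + if i = k' then t else 0) k'') ^ k''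
            + (1 - Γ j' k'')) * P j' k'' * Q k j'
            / (Pminus P j' * Qplus Q k)
          = P j' k'' * (Q k j' / (Pminus P j' * Qplus Q k))
            + (if k'' = k' then ((1 + t) ^ k' - 1) *
              (Γ j' k' * P j' k' * Q k j' / (Pminus P j' * Qplus Q k))
              else 0) := by
        intro k''
        by_cases h : k'' = k'
        · subst h
          simp only [eq_self_iff_true, if_true]
          ring
        · simp only [if_neg h, add_zero, one_pow]
          ring
      rw [tsum_congr hsplit,
        Summable.tsum_add ((hPsum j').mul_right _) ((hasSum_ite_eq k' _).summable),
        tsum_mul_right, tsum_ite_eq]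
      have hPm : (∑' k'' : ℕ, P j' k'') = Pminus P j' := rfl
      rw [hPm]
      have : Pminus P j' * (Q k j' / (Pminus P j' * Qplus Q k))
          = Q k j' / Qplus Q k := by
        rw [← mul_div_assoc, mul_div_mul_left _ _ (hPminus j').ne']
      rw [this]
    rw [percMap, tsum_congr inner,
      Summable.tsum_add (hQsum.div_const _) (hDsum.mul_left _), tsum_mul_left]
  -- rewrite the function and the derivative value
  have hfun : (fun t : ℝ =>
      percMap P Q Γ (fun i => 1 + if i = k' then t else 0) k)
      = fun t : ℝ => A + ((1 + t) ^ k' - 1) * B := funext key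
  have hval : (∑' j', (k' : ℝ) * Q k j' * P j' k' * Γ j' k'
      / (Qplus Q k * Pminus P j')) = (k' : ℝ) * B := by
    rw [hB, ← tsum_mul_left]
    refine tsum_congr fun j' => by ring
  rw [hfun, hval]
  have h1 : HasDerivAt (fun t : ℝ => 1 + t) 1 0 := by
    simpa using (hasDerivAt_id (0 : ℝ)).const_add (1 : ℝ)
  have h2 := ((h1.fun_pow k').sub_const 1).mul_const B
  have h3 := h2.const_add A
  convert h3 using 1 <;> try rfl
  norm_num
end
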